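/- Let n ≥ 1, let ν_1,…,ν_n be nonzero real numbers, and let x_1 ≤ x_2 ≤ … ≤ x_{n+1} be real. Then ∫_{W^{n,n+1}(x)} det( e^{ν_i y_j} )_{i,j=1}^n dy_1⋯dy_n = ( ∏_{i=1}^n ν_i^{-1} ) · det C, where C is the (n+1)×(n+1) matrix with first row C_{1,j} = 1 and C_{i+1,j} = e^{ν_i x_j} for 1 ≤ i ≤ n and 1 ≤ j ≤ n+1. (Applied with ν_i = μ_i - μ_{n+1}, this is the paper's computation of the intertwining kernel applied to the eigenfunction ĥ_n^{μ_{n+1},μ^{(n)}} in the construction for Brownian motions with drifts.) -/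

import Mathlib

open MeasureTheory

lemma integral_exp_Icc_aux (c a b : ℝ) (hc : c ≠ 0) (hab : a ≤ b) :
    ∫ t in Set.Icc a b, Real.exp (c * t)
      = c⁻¹ * (Real.exp (c * b) - Real.exp (c * a)) := by
  rw [MeasureTheory.integral_Icc_eq_integral_Ioc, ← intervalIntegral.integral_of_le hab,
    intervalIntegral.integral_comp_mul_left _ hc, integral_exp, smul_eq_mul]

lemma integral_pi_prod_aux {n : ℕ} (s : Fin n → Set ℝ) (hs : ∀ i, MeasurableSet (s i))
    (g : Fin n → ℝ → ℝ) :
    ∫ y in Set.univ.pi s, ∏ i, g i (y i) = ∏ i, ∫ t in s i, g i t := by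
  rw [← integral_indicator (MeasurableSet.univ_pi hs)]
  have key : ∀ y : Fin n → ℝ, (Set.univ.pi s).indicator (fun y => ∏ i, g i (y i)) y
      = ∏ i, (s i).indicator (g i) (y i) := by
    intro y
    by_cases h : y ∈ Set.univ.pi s
    · rw [Set.indicator_of_mem h]
      exact Finset.prod_congr rfl fun i _ =>
        (Set.indicator_of_mem (h i (Set.mem_univ i)) _).symm
    · rw [Set.indicator_of_notMem h]
      simp only [Set.mem_pi, Set.mem_univ, true_implies] at h
      push_neg at h
      obtain ⟨i, hi⟩ := h
      exact (Finset.prod_eq_zero (Finset.mem_univ i)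
        (Set.indicator_of_notMem hi _)).symm
  simp_rw [key]
  rw [MeasureTheory.integral_fintype_prod_volume_eq_prod (ι := Fin n)
    (fun i t => (s i).indicator (g i) t)]
  exact Finset.prod_congr rfl fun i _ => integral_indicator (hs i)

lemma det_border_aux {n : ℕ} (f : Fin n → Fin (n + 1) → ℝ) :
    Matrix.det (Matrix.of fun i j : Fin (n + 1) =>
        Fin.cases (motive := fun _ => ℝ) 1 (fun i' : Fin n => f i' j) i)
      = Matrix.det (Matrix.of fun i j : Fin n => f i j.succ - f i j.castSucc) := by
  set C : Matrix (Fin (n + 1)) (Fin (n + 1)) ℝ :=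
    Matrix.of fun i j : Fin (n + 1) =>
      Fin.cases (motive := fun _ => ℝ) 1 (fun i' : Fin n => f i' j) i with hC
  set D : Matrix (Fin (n + 1)) (Fin (n + 1)) ℝ :=
    Matrix.of fun i j : Fin (n + 1) =>
      Fin.cases (motive := fun _ => ℝ) (C i 0)
        (fun j' : Fin n => C i j'.succ - C i j'.castSucc) j with hD
  have hdet : C.det = D.det := by
    apply Matrix.det_eq_of_forall_col_eq_smul_add_pred (fun _ => (1 : ℝ))
    · intro i; simp [hD]
    · intro i j
      simp [hD]
  rw [hdet, Matrix.det_succ_row_zero, Fin.sum_univ_succ]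
  have h0 : D 0 0 = 1 := by simp [hD, hC]
  have hsucc : ∀ j : Fin n, D 0 j.succ = 0 := by
    intro j; simp [hD, hC]
  rw [h0]
  have htail : ∀ j : Fin n,
      (-1 : ℝ) ^ ((j.succ : Fin (n+1)) : ℕ) * D 0 j.succ
        * Matrix.det (D.submatrix Fin.succ (Fin.succAbove j.succ)) = 0 := by
    intro j; rw [hsucc j]; ring
  rw [Finset.sum_congr rfl fun j _ => htail j, Finset.sum_const, smul_zero, add_zero]
  rw [show ((-1 : ℝ) ^ (((0 : Fin (n+1))) : ℕ) * 1) = 1 by simp, one_mul]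
  congr 1

/-- For nonzero `ν_1,…,ν_n`:
`∫_{W^{n,n+1}(x)} det(e^{ν_i y_j})_{i,j=1}^n dy = (∏_i ν_i⁻¹) · det C`, where `C` is the
`(n+1)×(n+1)` matrix with first row all ones and `C_{i+1,j} = e^{ν_i x_j}`. -/
theorem integral_det_exp_over_interlacing_region (n : ℕ) (hn : 1 ≤ n)
    (ν : Fin n → ℝ) (hν : ∀ i, ν i ≠ 0)
    (x : Fin (n + 1) → ℝ) (hx : Monotone x) :
    ∫ y in Set.univ.pi (fun j : Fin n => Set.Icc (x j.castSucc) (x j.succ)),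
        Matrix.det (Matrix.of fun i j : Fin n => Real.exp (ν i * y j))
      = (∏ i : Fin n, (ν i)⁻¹) *
          Matrix.det (Matrix.of fun i j : Fin (n + 1) =>
            Fin.cases (motive := fun _ => ℝ) 1
              (fun i' : Fin n => Real.exp (ν i' * x j)) i) := by
  have hab : ∀ j : Fin n, x j.castSucc ≤ x j.succ := fun j =>
    hx (Fin.castSucc_le_succ j)
  rw [det_border_aux (fun i j => Real.exp (ν i * x j))]
  simp only [Matrix.det_apply', Matrix.of_apply]
  -- interchange integral and sum
  have hcompact : IsCompact (Set.univ.pi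
      (fun j : Fin n => Set.Icc (x j.castSucc) (x j.succ))) :=
    isCompact_univ_pi fun j => isCompact_Icc
  rw [MeasureTheory.integral_finset_sum]
  swap
  · intro σ _
    apply ContinuousOn.integrableOn_compact hcompact
    apply Continuous.continuousOn
    fun_prop
  have step : ∀ σ : Equiv.Perm (Fin n),
      ∫ y in Set.univ.pi (fun j : Fin n => Set.Icc (x j.castSucc) (x j.succ)),
          ((Equiv.Perm.sign σ : ℤ) : ℝ) * ∏ i, Real.exp (ν (σ i) * y i)
        = ((Equiv.Perm.sign σ : ℤ) : ℝ) * ((∏ i : Fin n, (ν i)⁻¹) *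
            ∏ i, (Real.exp (ν (σ i) * x (Fin.succ i))
              - Real.exp (ν (σ i) * x (Fin.castSucc i)))) := by
    intro σ
    rw [MeasureTheory.integral_const_mul,
      integral_pi_prod_aux _ (fun j => measurableSet_Icc)
        (fun i t => Real.exp (ν (σ i) * t))]
    congr 1
    rw [Finset.prod_congr rfl fun i _ =>
      integral_exp_Icc_aux (ν (σ i)) _ _ (hν (σ i)) (hab i)]
    rw [Finset.prod_mul_distrib]
    congr 1
    exact Equiv.prod_comp σ fun i => (ν i)⁻¹
  rw [Finset.sum_congr rfl fun σ _ => step σ]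
  rw [Finset.mul_sum]
  exact Finset.sum_congr rfl fun σ _ => by ring
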